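/- Let k ≥ 2 and n ≥ 2k be integers, and let G be a balanced bipartite graph on vertex set [2n] with bipartition (X, Y). Suppose u, v both lie in X (or both in Y) with u < v. If ρ(G) ≥ ρ(B_{n,k}) and S_{uv}(G) is isomorphic to B_{n,k}, then G is isomorphic to B_{n,k}. -/

import Mathlib

open SimpleGraph

/-- Spectral radius: supremum of the (real) eigenvalues of the adjacency matrix. -/
noncomputable def specRad {V : Type*} [Fintype V] [DecidableEq V] (G : SimpleGraph V) : ℝ :=
  sSup {x : ℝ | Module.End.HasEigenvalue
    (Matrix.toLin' (@SimpleGraph.adjMatrix ℝ V G (Classical.decRel _) _ _)) x}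

/-- The map on edges used by the `(x,y)`-shift: replace `y` by `x`. -/
def shiftMap {V : Type*} [DecidableEq V] (x y : V) (e : Sym2 V) : Sym2 V :=
  Sym2.map (fun v => if v = y then x else v) e

open scoped Classical in
/-- The `(x,y)`-shift of a graph. -/
noncomputable def shiftGraph {V : Type*} [DecidableEq V] (G : SimpleGraph V) (x y : V) :
    SimpleGraph V :=
  SimpleGraph.fromEdgeSet
    ((fun e => if y ∈ e ∧ x ∉ e ∧ shiftMap x y e ∉ G.edgeSet then shiftMap x y e else e) ''
      G.edgeSet)

/-- Balanced bipartite graph on `[2n]` with parts `X = {0,…,n-1}`, `Y = {n,…,2n-1}`: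
`x ∈ X` is adjacent to `y ∈ Y` iff `x < a` or `y < 2n - b`.
`bipG n (k-1) 1 = K_{k-1,n-1} ⊔ quasi-complement of K_{n-k+1,1}`. -/
def bipG (n a b : ℕ) : SimpleGraph (Fin (2*n)) where
  Adj u v := (u.val < n ∧ n ≤ v.val ∧ (u.val < a ∨ v.val < 2*n - b)) ∨
             (v.val < n ∧ n ≤ u.val ∧ (v.val < a ∨ u.val < 2*n - b))
  symm := ⟨by intro u v h; tauto⟩
  loopless := ⟨by intro u h; rcases h with ⟨h1, h2, -⟩ | ⟨h1, h2, -⟩ <;> omega⟩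

/-- `H` is a rainbow `k`-factor of the family `F`. -/
def IsRainbowFactor {V : Type*} {m : ℕ} (F : Fin m → SimpleGraph V) (k : ℕ)
    (H : SimpleGraph V) : Prop :=
  (∀ v, (H.neighborSet v).ncard = k) ∧
  ∃ φ : H.edgeSet ≃ Fin m, ∀ e : H.edgeSet, (e : Sym2 V) ∈ (F (φ e)).edgeSet

open scoped RealInnerProductSpace

def MP {V : Type*} (G : SimpleGraph V) (x y w : V) : Prop :=
  G.Adj y w ∧ ¬ G.Adj x w ∧ w ≠ x

lemma shiftMap_pair {V : Type*} [DecidableEq V] (x y c d : V) :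
    shiftMap x y s(c,d) = s(if c = y then x else c, if d = y then x else d) := by
  simp [shiftMap]

lemma shiftGraph_adj {V : Type*} [DecidableEq V] (G : SimpleGraph V) {x y : V} (hxy : x ≠ y)
    (a b : V) :
    (shiftGraph G x y).Adj a b ↔
      (G.Adj a b ∧ ¬(a = y ∧ MP G x y b) ∧ ¬(b = y ∧ MP G x y a)) ∨
      (a = x ∧ MP G x y b) ∨ (b = x ∧ MP G x y a) := by
  classical
  constructor
  · intro h
    rw [shiftGraph, SimpleGraph.fromEdgeSet_adj] at h
    obtain ⟨⟨e, heG, hfe⟩, hab⟩ := h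
    induction e using Sym2.ind with
    | _ c d =>
      dsimp only at hfe
      rw [SimpleGraph.mem_edgeSet] at heG
      by_cases hcond : y ∈ s(c,d) ∧ x ∉ s(c,d) ∧ shiftMap x y s(c,d) ∉ G.edgeSet
      · rw [if_pos hcond] at hfe
        obtain ⟨hy, hx, hsh⟩ := hcond
        rw [Sym2.mem_iff] at hx
        push_neg at hx
        rw [Sym2.mem_iff] at hy
        rcases hy with rfl | rfl
        · have hd : d ≠ y := fun hd => G.irrefl (hd ▸ heG)
          rw [shiftMap_pair, if_pos rfl, if_neg hd] at hfe hsh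
          rw [SimpleGraph.mem_edgeSet] at hsh
          have hMP : MP G x y d := ⟨heG, hsh, fun hdx => hx.2 hdx.symm⟩
          rw [Sym2.eq_iff] at hfe
          rcases hfe with ⟨h1, h2⟩ | ⟨h1, h2⟩
          · exact Or.inr (Or.inl ⟨h1.symm, h2 ▸ hMP⟩)
          · exact Or.inr (Or.inr ⟨h1.symm, h2 ▸ hMP⟩)
        · have hc : c ≠ y := fun h => G.irrefl (h ▸ heG)
          rw [shiftMap_pair, if_neg hc, if_pos rfl] at hfe hsh
          rw [SimpleGraph.mem_edgeSet] at hsh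
          have hMP : MP G x y c := ⟨G.adj_symm heG, fun h => hsh (G.adj_symm h), fun hcx => hx.1 hcx.symm⟩
          rw [Sym2.eq_iff] at hfe
          rcases hfe with ⟨h1, h2⟩ | ⟨h1, h2⟩
          · exact Or.inr (Or.inr ⟨h2.symm, h1 ▸ hMP⟩)
          · exact Or.inr (Or.inl ⟨h2.symm, h1 ▸ hMP⟩)
      · rw [if_neg hcond] at hfe
        have hGab : G.Adj a b := (SimpleGraph.mem_edgeSet _).mp
          (hfe ▸ (SimpleGraph.mem_edgeSet _).mpr heG)
        refine Or.inl ⟨hGab, ?_, ?_⟩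
        · rintro ⟨ha, hMb⟩
          subst ha
          obtain ⟨hyb, hxb, hbx⟩ := hMb
          apply hcond
          rw [hfe]
          refine ⟨?_, ?_, ?_⟩
          · rw [Sym2.mem_iff]; exact Or.inl rfl
          · rw [Sym2.mem_iff]; push_neg; exact ⟨hxy, Ne.symm hbx⟩
          · rw [shiftMap_pair, if_pos rfl, if_neg hyb.ne', SimpleGraph.mem_edgeSet]
            exact hxb
        · rintro ⟨hb, hMa⟩
          subst hb
          obtain ⟨hya, hxa, hax⟩ := hMa
          apply hcond
          rw [hfe]
          refine ⟨?_, ?_, ?_⟩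
          · rw [Sym2.mem_iff]; exact Or.inr rfl
          · rw [Sym2.mem_iff]; push_neg; exact ⟨Ne.symm hax, hxy⟩
          · rw [shiftMap_pair, if_neg hya.ne', if_pos rfl, SimpleGraph.mem_edgeSet]
            intro hcontra
            exact hxa (G.adj_symm hcontra)
  · intro h
    rw [shiftGraph, SimpleGraph.fromEdgeSet_adj]
    rcases h with ⟨hGab, hA, hB⟩ | ⟨ha, hMb⟩ | ⟨hb, hMa⟩
    · refine ⟨⟨s(a,b), (SimpleGraph.mem_edgeSet _).mpr hGab, ?_⟩, hGab.ne⟩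
      show (if y ∈ s(a,b) ∧ x ∉ s(a,b) ∧ shiftMap x y s(a,b) ∉ G.edgeSet
        then shiftMap x y s(a,b) else s(a,b)) = s(a,b)
      rw [if_neg]
      rintro ⟨hy, hx, hsh⟩
      rw [Sym2.mem_iff] at hy hx
      push_neg at hx
      rcases hy with rfl | rfl
      · rw [shiftMap_pair, if_pos rfl, if_neg hGab.ne', SimpleGraph.mem_edgeSet] at hsh
        exact hA ⟨rfl, hGab, hsh, fun h => hx.2 h.symm⟩
      · rw [shiftMap_pair, if_neg hGab.ne, if_pos rfl, SimpleGraph.mem_edgeSet] at hsh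
        exact hB ⟨rfl, G.adj_symm hGab, fun h => hsh (G.adj_symm h), fun h => hx.1 h.symm⟩
    · rw [ha]
      obtain ⟨hyb, hxb, hbx⟩ := hMb
      have hcond : y ∈ s(y,b) ∧ x ∉ s(y,b) ∧ shiftMap x y s(y,b) ∉ G.edgeSet := by
        refine ⟨?_, ?_, ?_⟩
        · rw [Sym2.mem_iff]; exact Or.inl rfl
        · rw [Sym2.mem_iff]; push_neg; exact ⟨hxy, Ne.symm hbx⟩
        · rw [shiftMap_pair, if_pos rfl, if_neg hyb.ne', SimpleGraph.mem_edgeSet]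
          exact hxb
      refine ⟨⟨s(y,b), (SimpleGraph.mem_edgeSet _).mpr hyb, ?_⟩, Ne.symm hbx⟩
      show (if y ∈ s(y,b) ∧ x ∉ s(y,b) ∧ shiftMap x y s(y,b) ∉ G.edgeSet
        then shiftMap x y s(y,b) else s(y,b)) = s(x,b)
      rw [if_pos hcond, shiftMap_pair, if_pos rfl, if_neg hyb.ne']
    · rw [hb]
      obtain ⟨hya, hxa, hax⟩ := hMa
      have hcond : y ∈ s(y,a) ∧ x ∉ s(y,a) ∧ shiftMap x y s(y,a) ∉ G.edgeSet := by
        refine ⟨?_, ?_, ?_⟩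
        · rw [Sym2.mem_iff]; exact Or.inl rfl
        · rw [Sym2.mem_iff]; push_neg; exact ⟨hxy, Ne.symm hax⟩
        · rw [shiftMap_pair, if_pos rfl, if_neg hya.ne', SimpleGraph.mem_edgeSet]
          exact hxa
      refine ⟨⟨s(y,a), (SimpleGraph.mem_edgeSet _).mpr hya, ?_⟩, hax⟩
      show (if y ∈ s(y,a) ∧ x ∉ s(y,a) ∧ shiftMap x y s(y,a) ∉ G.edgeSet
        then shiftMap x y s(y,a) else s(y,a)) = s(a,x)
      rw [if_pos hcond, shiftMap_pair, if_pos rfl, if_neg hya.ne']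
      exact Sym2.eq_swap


set_option linter.unusedSectionVars false

section SpectralAux

open Matrix
open scoped Classical

variable {V : Type*} [Fintype V] [DecidableEq V]

noncomputable def adjM (G : SimpleGraph V) : Matrix V V ℝ :=
  @SimpleGraph.adjMatrix ℝ V G (Classical.decRel _) _ _

lemma adjM_apply (G : SimpleGraph V) (a b : V) :
    adjM G a b = if G.Adj a b then 1 else 0 := by
  by_cases h : G.Adj a b <;> simp [adjM, SimpleGraph.adjMatrix, h]

lemma adjM_nonneg (G : SimpleGraph V) (a b : V) : 0 ≤ adjM G a b := by
  rw [adjM_apply]; split <;> norm_num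

lemma adjM_symm (G : SimpleGraph V) (a b : V) : adjM G a b = adjM G b a := by
  rw [adjM_apply, adjM_apply, G.adj_comm]

noncomputable def TG (G : SimpleGraph V) :
    EuclideanSpace ℝ V →ₗ[ℝ] EuclideanSpace ℝ V := Matrix.toEuclideanLin (adjM G)

lemma TG_apply (G : SimpleGraph V) (x : EuclideanSpace ℝ V) (a : V) :
    TG G x a = ∑ b, adjM G a b * x b := rfl

lemma smul_apply' (r : ℝ) (x : EuclideanSpace ℝ V) (a : V) : (r • x) a = r * x a := rfl

lemma isSymmetric_TG (G : SimpleGraph V) : (TG G).IsSymmetric := by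
  have h : (adjM G).IsHermitian := by
    unfold Matrix.IsHermitian
    ext a b
    simp [Matrix.conjTranspose_apply, adjM_symm G b a]
  exact Matrix.isHermitian_iff_isSymmetric.mp h

lemma inner_TG (G : SimpleGraph V) (x : EuclideanSpace ℝ V) :
    ⟪TG G x, x⟫ = ∑ a, (∑ b, adjM G a b * x b) * x a := by
  rw [PiLp.inner_apply]
  simp [RCLike.inner_apply, TG_apply]
  exact Finset.sum_congr rfl fun _ _ => mul_comm _ _

noncomputable def rq (G : SimpleGraph V) (x : EuclideanSpace ℝ V) : ℝ :=
  RCLike.re ⟪TG G x, x⟫ / ‖x‖ ^ 2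

noncomputable def specRad' (G : SimpleGraph V) : ℝ :=
  ⨆ x : {x : EuclideanSpace ℝ V // x ≠ 0}, rq G x

lemma rq_bdd (G : SimpleGraph V) (x : EuclideanSpace ℝ V) :
    rq G x ≤ ‖LinearMap.toContinuousLinearMap (TG G)‖ := by
  unfold rq
  rcases eq_or_ne x 0 with rfl | hx
  · simp only [inner_zero_right, map_zero, zero_div]
    exact norm_nonneg _
  · have hn : 0 < ‖x‖ := norm_pos_iff.mpr hx
    rw [div_le_iff₀ (by positivity)]
    have h1 : ⟪TG G x, x⟫ ≤ ‖TG G x‖ * ‖x‖ := real_inner_le_norm _ _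
    have h2 : ‖TG G x‖ ≤ ‖LinearMap.toContinuousLinearMap (TG G)‖ * ‖x‖ :=
      (LinearMap.toContinuousLinearMap (TG G)).le_opNorm x
    have : ⟪TG G x, x⟫ ≤ ‖LinearMap.toContinuousLinearMap (TG G)‖ * ‖x‖ * ‖x‖ :=
      h1.trans (by nlinarith)
    calc RCLike.re ⟪TG G x, x⟫ = ⟪TG G x, x⟫ := RCLike.re_to_real
    _ ≤ _ := by nlinarith

lemma bddAbove_rq (G : SimpleGraph V) :
    BddAbove (Set.range fun x : {x : EuclideanSpace ℝ V // x ≠ 0} => rq G x.1) := by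
  refine ⟨‖LinearMap.toContinuousLinearMap (TG G)‖, ?_⟩
  rintro r ⟨x, rfl⟩
  exact rq_bdd G x.1

lemma rq_le_specRad' [Nonempty V] (G : SimpleGraph V) {x : EuclideanSpace ℝ V} (hx : x ≠ 0) :
    rq G x ≤ specRad' G :=
  le_ciSup (bddAbove_rq G) ⟨x, hx⟩

lemma hasEig_specRad' [Nonempty V] (G : SimpleGraph V) :
    Module.End.HasEigenvalue (TG G) (specRad' G) := by
  have h := (isSymmetric_TG G).hasEigenvalue_iSup_of_finiteDimensional (T := TG G)
  have e : (↑(⨆ x : {x : EuclideanSpace ℝ V // x ≠ 0},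
      RCLike.re ⟪TG G x, x⟫ / ‖(x : EuclideanSpace ℝ V)‖ ^ 2) : ℝ) = specRad' G := rfl
  rwa [e] at h

lemma hasEig_iff {W : Type*} [AddCommGroup W] [Module ℝ W] (f : Module.End ℝ W) (μ : ℝ) :
    f.HasEigenvalue μ ↔ ∃ x : W, f x = μ • x ∧ x ≠ 0 := by
  constructor
  · intro h
    obtain ⟨x, hx⟩ := h.exists_hasEigenvector
    exact ⟨x, Module.End.mem_eigenspace_iff.mp hx.1, hx.2⟩
  · rintro ⟨x, hx, h0⟩
    exact Module.End.hasEigenvalue_of_hasEigenvector ⟨Module.End.mem_eigenspace_iff.mpr hx, h0⟩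

lemma eig_le_specRad' [Nonempty V] (G : SimpleGraph V) {μ : ℝ}
    (h : Module.End.HasEigenvalue (TG G) μ) : μ ≤ specRad' G := by
  obtain ⟨x, hx, h0⟩ := (hasEig_iff _ _).mp h
  have hn : 0 < ‖x‖ := norm_pos_iff.mpr h0
  have : rq G x = μ := by
    unfold rq
    rw [hx, real_inner_smul_left, real_inner_self_eq_norm_sq, RCLike.re_to_real]
    field_simp
  rw [← this]
  exact rq_le_specRad' G h0


lemma toEuclideanLin_apply' (A : Matrix V V ℝ) (x : EuclideanSpace ℝ V) (a : V) :
    Matrix.toEuclideanLin A x a = ∑ b, A a b * x b := rfl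

lemma hasEig_eucl_iff (A : Matrix V V ℝ) (μ : ℝ) :
    Module.End.HasEigenvalue (Matrix.toEuclideanLin A) μ ↔
      ∃ x : V → ℝ, (∀ a, ∑ b, A a b * x b = μ * x a) ∧ x ≠ 0 := by
  rw [hasEig_iff]
  constructor
  · rintro ⟨x, hx, h0⟩
    refine ⟨x.ofLp, fun a => ?_, fun h => h0 (by rw [← WithLp.toLp_ofLp (x := x), h]; rfl)⟩
    have h : Matrix.toEuclideanLin A x a = (μ • x) a := congrArg (fun w : EuclideanSpace ℝ V => w a) hx
    rw [toEuclideanLin_apply'] at h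
    exact h
  · rintro ⟨x, hx, h0⟩
    refine ⟨WithLp.toLp 2 x, ?_, fun h => h0 (by simpa using congrArg WithLp.ofLp h)⟩
    ext a
    rw [toEuclideanLin_apply']
    simpa using hx a

lemma hasEig_lin'_iff (A : Matrix V V ℝ) (μ : ℝ) :
    Module.End.HasEigenvalue (Matrix.toLin' A) μ ↔
      ∃ x : V → ℝ, (∀ a, ∑ b, A a b * x b = μ * x a) ∧ x ≠ 0 := by
  rw [hasEig_iff]
  constructor
  · rintro ⟨x, hx, h0⟩
    refine ⟨x, fun a => ?_, h0⟩
    have h := congrFun hx a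
    rw [Matrix.toLin'_apply] at h
    exact h
  · rintro ⟨x, hx, h0⟩
    refine ⟨x, ?_, h0⟩
    rw [Matrix.toLin'_apply]
    exact funext hx

lemma specRad_eq [Nonempty V] (G : SimpleGraph V) : specRad G = specRad' G := by
  unfold specRad
  rw [show (@SimpleGraph.adjMatrix ℝ V G (Classical.decRel _) _ _) = adjM G from rfl]
  apply IsGreatest.csSup_eq
  constructor
  · show Module.End.HasEigenvalue (Matrix.toLin' (adjM G)) (specRad' G)
    rw [hasEig_lin'_iff, ← hasEig_eucl_iff]
    exact hasEig_specRad' G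
  · rintro μ hμ
    rw [Set.mem_setOf_eq, hasEig_lin'_iff, ← hasEig_eucl_iff] at hμ
    exact eig_le_specRad' G hμ

lemma inner_le_specRad [Nonempty V] (G : SimpleGraph V) {x : EuclideanSpace ℝ V}
    (hx : ‖x‖ = 1) : ⟪TG G x, x⟫ ≤ specRad G := by
  have h0 : x ≠ 0 := fun h => by simp [h] at hx
  have h := rq_le_specRad' G h0
  rw [specRad_eq]
  unfold rq at h
  rwa [hx, one_pow, div_one, RCLike.re_to_real] at h

lemma exists_top_eigvec [Nonempty V] (G : SimpleGraph V) :
    ∃ x : EuclideanSpace ℝ V, ‖x‖ = 1 ∧ TG G x = specRad G • x := by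
  obtain ⟨y, hy, h0⟩ := (hasEig_iff _ _).mp (hasEig_specRad' G)
  refine ⟨‖y‖⁻¹ • y, norm_smul_inv_norm h0, ?_⟩
  rw [_root_.map_smul, hy, smul_comm, specRad_eq]

lemma eigvec_of_max [Nonempty V] (G : SimpleGraph V) {x : EuclideanSpace ℝ V} (hx : ‖x‖ = 1)
    (hQ : ⟪TG G x, x⟫ = specRad G) : TG G x = specRad G • x := by
  have h0 : x ≠ 0 := fun h => by simp [h] at hx
  set T' := (isSymmetric_TG G).toSelfAdjoint with hT'
  have hmax : IsMaxOn T'.val.reApplyInnerSelf (Metric.sphere (0 : EuclideanSpace ℝ V) ‖x‖) x := by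
    intro z hz
    have hz1 : ‖z‖ = 1 := by
      have := mem_sphere_zero_iff_norm.mp hz
      rw [this, hx]
    show T'.val.reApplyInnerSelf z ≤ T'.val.reApplyInnerSelf x
    have e1 : ∀ w : EuclideanSpace ℝ V, T'.val.reApplyInnerSelf w = ⟪TG G w, w⟫ := by
      intro w
      show RCLike.re ⟪TG G w, w⟫ = ⟪TG G w, w⟫
      exact RCLike.re_to_real
    rw [e1, e1, hQ]
    exact inner_le_specRad G hz1
  have hev := T'.prop.hasEigenvector_of_isMaxOn h0 hmax
  have h2 : TG G x =
      (⨆ z : {z : EuclideanSpace ℝ V // z ≠ 0}, T'.val.rayleighQuotient z) • x :=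
    Module.End.mem_eigenspace_iff.mp hev.1
  rw [h2, specRad_eq]
  rfl

lemma map_adjM {G G' : SimpleGraph V} (e : G ≃g G') (a b : V) :
    adjM G' a b = adjM G (e.symm a) (e.symm b) := by
  rw [adjM_apply, adjM_apply]
  congr 1
  rw [eq_iff_iff]
  exact (SimpleGraph.Iso.map_adj_iff e.symm).symm

lemma hasEig_iso {G G' : SimpleGraph V} (e : G ≃g G') {μ : ℝ}
    (h : ∃ x : V → ℝ, (∀ a, ∑ b, adjM G a b * x b = μ * x a) ∧ x ≠ 0) :
    ∃ x : V → ℝ, (∀ a, ∑ b, adjM G' a b * x b = μ * x a) ∧ x ≠ 0 := by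
  obtain ⟨x, hx, h0⟩ := h
  refine ⟨fun i => x (e.symm i), fun a => ?_, ?_⟩
  · calc ∑ b, adjM G' a b * x (e.symm b)
        = ∑ b, adjM G (e.symm a) (e.symm b) * x (e.symm b) := by
          exact Finset.sum_congr rfl fun b _ => by rw [map_adjM e]
      _ = ∑ c, adjM G (e.symm a) c * x c :=
          Equiv.sum_comp e.toEquiv.symm (fun c => adjM G (e.symm a) c * x c)
      _ = μ * x (e.symm a) := hx _
  · intro hcontra
    apply h0; funext i
    have := congrFun hcontra (e i)
    simpa using this

lemma specRad_iso [Nonempty V] {G G' : SimpleGraph V} (e : G ≃g G') :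
    specRad G = specRad G' := by
  unfold specRad
  refine congrArg sSup ?_
  ext μ
  simp only [Set.mem_setOf_eq]
  rw [show (@SimpleGraph.adjMatrix ℝ V G (Classical.decRel _) _ _) = adjM G from rfl,
      show (@SimpleGraph.adjMatrix ℝ V G' (Classical.decRel _) _ _) = adjM G' from rfl,
      hasEig_lin'_iff, hasEig_lin'_iff]
  exact ⟨hasEig_iso e, hasEig_iso e.symm⟩

lemma one_le_specRad [Nonempty V] (G : SimpleGraph V) {a b : V} (hab : G.Adj a b) :
    1 ≤ specRad G := by
  set z : EuclideanSpace ℝ V :=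
    WithLp.toLp 2 (fun i => (if i = a then (1:ℝ) else 0) + (if i = b then 1 else 0)) with hzdef
  have hza : z a = 1 := by simp [hzdef, hab.ne]
  have h0 : z ≠ 0 := by
    intro h
    have : z a = (0 : EuclideanSpace ℝ V) a := congrArg (fun w : EuclideanSpace ℝ V => w a) h
    rw [hza] at this
    simpa using this
  have hv : ∀ f : V → ℝ, ∑ i, z i * f i = f a + f b := by
    intro f
    simp only [hzdef, add_mul, ite_mul, one_mul, zero_mul, Finset.sum_add_distrib]
    rw [Finset.sum_ite_eq' Finset.univ a f, Finset.sum_ite_eq' Finset.univ b f]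
    simp
  have hTz : ∀ c : V, TG G z c = adjM G c a + adjM G c b := by
    intro c
    rw [TG_apply]
    rw [show (∑ b', adjM G c b' * z b') = ∑ b', z b' * adjM G c b' from
      Finset.sum_congr rfl fun _ _ => mul_comm _ _]
    exact hv (adjM G c)
  have hinner : ⟪TG G z, z⟫ = 2 := by
    rw [PiLp.inner_apply]
    simp only [RCLike.inner_apply, starRingEnd_apply, star_trivial]
    rw [hv (TG G z), hTz, hTz]
    rw [adjM_apply, adjM_apply, adjM_apply, adjM_apply]
    simp [hab, hab.symm, G.irrefl]
    norm_num
  have hnorm : ‖z‖ ^ 2 = 2 := by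
    rw [← real_inner_self_eq_norm_sq, PiLp.inner_apply]
    simp only [RCLike.inner_apply, starRingEnd_apply, star_trivial]
    rw [hv z, hza]
    simp [hzdef, hab.ne.symm]
    norm_num
  have hrq : rq G z = 1 := by
    unfold rq
    rw [hnorm, hinner, RCLike.re_to_real]
    norm_num
  rw [specRad_eq]
  rw [← hrq]
  exact rq_le_specRad' G h0


noncomputable def Mf (G : SimpleGraph V) (x y : V) : Finset V :=
  Finset.univ.filter (fun w => MP G x y w)

lemma mem_Mf {G : SimpleGraph V} {x y w : V} : w ∈ Mf G x y ↔ MP G x y w := by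
  simp [Mf]

lemma adjM_shift (G : SimpleGraph V) {x y : V} (hxy : x ≠ y) (a b : V) :
    adjM (shiftGraph G x y) a b = adjM G a b
      + (if a = x ∧ MP G x y b then 1 else 0) + (if b = x ∧ MP G x y a then 1 else 0)
      - (if a = y ∧ MP G x y b then 1 else 0) - (if b = y ∧ MP G x y a then 1 else 0) := by
  rw [adjM_apply, adjM_apply]
  simp only [shiftGraph_adj G hxy]
  by_cases h1 : a = x ∧ MP G x y b
  · have hg : ¬ G.Adj a b := by rw [h1.1]; exact h1.2.2.1
    have h2 : ¬(b = x ∧ MP G x y a) := fun h => h1.2.2.2 h.1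
    have h3 : ¬(a = y ∧ MP G x y b) := fun h => hxy (h1.1.symm.trans h.1)
    have h4 : ¬(b = y ∧ MP G x y a) := fun h => h1.2.1.ne' h.1
    rw [if_pos (Or.inr (Or.inl h1)), if_neg hg, if_pos h1, if_neg h2, if_neg h3, if_neg h4]
    ring
  by_cases h2 : b = x ∧ MP G x y a
  · have hg : ¬ G.Adj a b := fun h => h2.2.2.1 (G.adj_symm (h2.1 ▸ h))
    have h3 : ¬(a = y ∧ MP G x y b) := fun h => h2.2.1.ne' h.1
    have h4 : ¬(b = y ∧ MP G x y a) := fun h => hxy (h2.1.symm.trans h.1)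
    rw [if_pos (Or.inr (Or.inr h2)), if_neg hg, if_neg h1, if_pos h2, if_neg h3, if_neg h4]
    ring
  by_cases h3 : a = y ∧ MP G x y b
  · have hg : G.Adj a b := by rw [h3.1]; exact h3.2.1
    have h4 : ¬(b = y ∧ MP G x y a) := fun h => h3.2.1.ne' h.1
    have hS : ¬((G.Adj a b ∧ ¬(a = y ∧ MP G x y b) ∧ ¬(b = y ∧ MP G x y a)) ∨
        (a = x ∧ MP G x y b) ∨ (b = x ∧ MP G x y a)) := by
      rintro (⟨-, hA, -⟩ | hx1 | hx2)
      · exact hA h3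
      · exact h1 hx1
      · exact h2 hx2
    rw [if_neg hS, if_pos hg, if_neg h1, if_neg h2, if_pos h3, if_neg h4]
    ring
  by_cases h4 : b = y ∧ MP G x y a
  · have hg : G.Adj a b := by rw [h4.1]; exact G.adj_symm h4.2.1
    have hS : ¬((G.Adj a b ∧ ¬(a = y ∧ MP G x y b) ∧ ¬(b = y ∧ MP G x y a)) ∨
        (a = x ∧ MP G x y b) ∨ (b = x ∧ MP G x y a)) := by
      rintro (⟨-, -, hB⟩ | hx1 | hx2)
      · exact hB h4
      · exact h1 hx1
      · exact h2 hx2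
    rw [if_neg hS, if_pos hg, if_neg h1, if_neg h2, if_neg h3, if_pos h4]
    ring
  · rw [if_neg h1, if_neg h2, if_neg h3, if_neg h4]
    by_cases hg : G.Adj a b
    · rw [if_pos (Or.inl ⟨hg, h3, h4⟩), if_pos hg]
      ring
    · have hS : ¬((G.Adj a b ∧ ¬(a = y ∧ MP G x y b) ∧ ¬(b = y ∧ MP G x y a)) ∨
          (a = x ∧ MP G x y b) ∨ (b = x ∧ MP G x y a)) := by
        rintro (⟨hga, -, -⟩ | hx1 | hx2)
        · exact hg hga
        · exact h1 hx1
        · exact h2 hx2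
      rw [if_neg hS, if_neg hg]
      ring

lemma mulVec_shift (G : SimpleGraph V) {x y : V} (hxy : x ≠ y) (z : EuclideanSpace ℝ V)
    (a : V) :
    TG (shiftGraph G x y) z a = TG G z a
      + (if a = x then ∑ w ∈ Mf G x y, z w else 0)
      - (if a = y then ∑ w ∈ Mf G x y, z w else 0)
      + (if MP G x y a then z x - z y else 0) := by
  rw [TG_apply, TG_apply]
  have hpt : ∀ b, adjM (shiftGraph G x y) a b * z b = adjM G a b * z b
      + (if a = x ∧ MP G x y b then z b else 0) + (if b = x ∧ MP G x y a then z b else 0)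
      - (if a = y ∧ MP G x y b then z b else 0) - (if b = y ∧ MP G x y a then z b else 0) := by
    intro b; rw [adjM_shift G hxy]; split_ifs <;> ring
  rw [Finset.sum_congr rfl (fun b _ => hpt b)]
  have e1 : ∀ c : V, (∑ b, (if c = x ∧ MP G x y b then z b else 0))
      = (if c = x then ∑ w ∈ Mf G x y, z w else 0) := by
    intro c
    by_cases hcx : c = x
    · subst hcx
      simp [Mf, Finset.sum_filter]
    · simp [hcx]
  have e2 : ∀ c : V, (∑ b, (if c = y ∧ MP G x y b then z b else 0))
      = (if c = y then ∑ w ∈ Mf G x y, z w else 0) := by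
    intro c
    by_cases hcy : c = y
    · subst hcy
      simp [Mf, Finset.sum_filter]
    · simp [hcy]
  have e3 : ∀ c : V, (∑ b, (if b = c ∧ MP G x y a then z b else 0))
      = (if MP G x y a then z c else 0) := by
    intro c
    by_cases hma : MP G x y a
    · simp only [hma, and_true, if_pos hma]
      exact Finset.sum_ite_eq' Finset.univ c z |>.trans (by simp)
    · simp [hma]
  simp only [Finset.sum_add_distrib, Finset.sum_sub_distrib]
  rw [e1 a, e2 a, e3 x, e3 y]
  split_ifs <;> ring

lemma inner_shift (G : SimpleGraph V) {x y : V} (hxy : x ≠ y) (z : EuclideanSpace ℝ V) :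
    ⟪TG (shiftGraph G x y) z, z⟫ = ⟪TG G z, z⟫ + 2 * (z x - z y) * ∑ w ∈ Mf G x y, z w := by
  rw [PiLp.inner_apply, PiLp.inner_apply]
  simp only [RCLike.inner_apply, starRingEnd_apply, star_trivial]
  have hpt : ∀ a, TG (shiftGraph G x y) z a * z a = TG G z a * z a
      + ((if a = x then ∑ w ∈ Mf G x y, z w else 0) * z a)
      - ((if a = y then ∑ w ∈ Mf G x y, z w else 0) * z a)
      + ((if MP G x y a then z x - z y else 0) * z a) := by
    intro a; rw [mulVec_shift G hxy]; ring
  rw [show (∑ i, z i * TG (shiftGraph G x y) z i) = ∑ i, TG (shiftGraph G x y) z i * z i from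
    Finset.sum_congr rfl fun _ _ => mul_comm _ _,
    show (∑ i, z i * TG G z i) = ∑ i, TG G z i * z i from
    Finset.sum_congr rfl fun _ _ => mul_comm _ _]
  rw [Finset.sum_congr rfl (fun a _ => hpt a)]
  simp only [Finset.sum_add_distrib, Finset.sum_sub_distrib]
  have e1 : ∀ c : V, (∑ a, (if a = c then ∑ w ∈ Mf G x y, z w else 0) * z a)
      = (∑ w ∈ Mf G x y, z w) * z c := by
    intro c
    simp only [ite_mul, zero_mul]
    exact Finset.sum_ite_eq' Finset.univ c (fun a => (∑ w ∈ Mf G x y, z w) * z a)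
      |>.trans (by simp)
  have e3 : (∑ a, (if MP G x y a then z x - z y else 0) * z a)
      = (z x - z y) * ∑ w ∈ Mf G x y, z w := by
    rw [Finset.mul_sum, Mf, Finset.sum_filter]
    exact Finset.sum_congr rfl fun a _ => by split_ifs <;> ring
  rw [e1 x, e1 y, e3]
  ring

lemma shiftGraph_eq_self (G : SimpleGraph V) {x y : V} (hxy : x ≠ y)
    (h : ∀ w, ¬ MP G x y w) : shiftGraph G x y = G := by
  ext a b
  rw [shiftGraph_adj G hxy]
  have ha := h a
  have hb := h b
  tauto

set_option maxHeartbeats 16000000 in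
lemma shift_swap_adj (G : SimpleGraph V) {x y : V} (hxy : x ≠ y) (a b : V) :
    (shiftGraph G y x).Adj a b ↔
      (shiftGraph G x y).Adj (Equiv.swap x y a) (Equiv.swap x y b) := by
  rw [shiftGraph_adj G hxy.symm, shiftGraph_adj G hxy]
  have hix : ¬ G.Adj x x := G.irrefl
  have hiy : ¬ G.Adj y y := G.irrefl
  have hc : G.Adj x y ↔ G.Adj y x := G.adj_comm x y
  have hxy1 : ¬ (x = y) := hxy
  have hxy2 : ¬ (y = x) := fun h => hxy h.symm
  have hcxa : G.Adj x a ↔ G.Adj a x := G.adj_comm x a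
  have hcya : G.Adj y a ↔ G.Adj a y := G.adj_comm y a
  have hcxb : G.Adj x b ↔ G.Adj b x := G.adj_comm x b
  have hcyb : G.Adj y b ↔ G.Adj b y := G.adj_comm y b
  clear hxy
  rcases eq_or_ne a x with hax | hax
  · rcases eq_or_ne b x with hbx | hbx
    · clear hc hcxa hcya hcxb hcyb
      simp only [hax, hbx, Equiv.swap_apply_left, MP, ne_eq]
      tauto
    · rcases eq_or_ne b y with hby | hby
      · clear hcxa hcya hcxb hcyb
        simp only [hax, hby, Equiv.swap_apply_left, Equiv.swap_apply_right, MP, ne_eq]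
        tauto
      · clear hc hcxa hcya hcxb hcyb
        simp only [hax, Equiv.swap_apply_left, Equiv.swap_apply_of_ne_of_ne hbx hby, MP, ne_eq]
        tauto
  · rcases eq_or_ne a y with hay | hay
    · rcases eq_or_ne b x with hbx | hbx
      · clear hcxa hcya hcxb hcyb
        simp only [hay, hbx, Equiv.swap_apply_right, Equiv.swap_apply_left, MP, ne_eq]
        tauto
      · rcases eq_or_ne b y with hby | hby
        · clear hc hcxa hcya hcxb hcyb
          simp only [hay, hby, Equiv.swap_apply_right, MP, ne_eq]
          tauto
        · clear hc hcxa hcya hcxb hcyb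
          simp only [hay, Equiv.swap_apply_right, Equiv.swap_apply_of_ne_of_ne hbx hby, MP,
            ne_eq]
          tauto
    · rcases eq_or_ne b x with hbx | hbx
      · clear hc hcxb hcyb hcxa hcya
        simp only [hbx, Equiv.swap_apply_left, Equiv.swap_apply_of_ne_of_ne hax hay, MP, ne_eq,
          G.adj_comm a x, G.adj_comm a y]
        tauto
      · rcases eq_or_ne b y with hby | hby
        · clear hc hcxb hcyb hcxa hcya
          simp only [hby, Equiv.swap_apply_right, Equiv.swap_apply_of_ne_of_ne hax hay, MP,
            ne_eq, G.adj_comm a x, G.adj_comm a y]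
          tauto
        · clear hc hcxa hcya hcxb hcyb hix hiy
          simp only [Equiv.swap_apply_of_ne_of_ne hax hay,
            Equiv.swap_apply_of_ne_of_ne hbx hby, MP, ne_eq]
          tauto

noncomputable def shiftSwapIso (G : SimpleGraph V) {x y : V} (hxy : x ≠ y) :
    shiftGraph G y x ≃g shiftGraph G x y :=
  ⟨Equiv.swap x y, fun {a b} => (shift_swap_adj G hxy a b).symm⟩

def isoOfEq {W : Type*} {G₁ G₂ : SimpleGraph W} (h : G₁ = G₂) : G₁ ≃g G₂ :=
  ⟨Equiv.refl W, fun {a b} => by rw [h]; rfl⟩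

lemma eig_zero_prop (H : SimpleGraph V) (z : EuclideanSpace ℝ V) (ρ : ℝ) (hρ : 0 < ρ)
    (hznn : ∀ a, 0 ≤ z a) (heq : TG H z = ρ • z) (hconn : H.Preconnected)
    {w : V} (hw : z w = 0) : ∀ a, z a = 0 := by
  have step : ∀ b c, H.Adj b c → z b = 0 → z c = 0 := by
    intro b c hbc hb
    have h0 : ∑ d, adjM H b d * z d = 0 := by
      have h : TG H z b = (ρ • z) b := congrArg (fun w : EuclideanSpace ℝ V => w b) heq
      rw [TG_apply] at h
      rw [h, smul_apply', hb, mul_zero]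
    have hterm := (Finset.sum_eq_zero_iff_of_nonneg
      (fun d _ => mul_nonneg (adjM_nonneg H b d) (hznn d))).mp h0 c (Finset.mem_univ c)
    rw [adjM_apply, if_pos hbc, one_mul] at hterm
    exact hterm
  have main : ∀ {b c : V}, H.Walk b c → z b = 0 → z c = 0 := by
    intro b c p
    induction p with
    | nil => exact id
    | cons h _ ih => exact fun hb => ih (step _ _ h hb)
  intro a
  exact (hconn w a).elim fun p => main p hw


lemma preconnected_of_iso {G H : SimpleGraph V} (e : G ≃g H) (h : H.Preconnected) :
    G.Preconnected := by
  intro a b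
  have := (h (e a) (e b)).map e.symm.toHom
  simpa using this

lemma key [Nonempty V] (G : SimpleGraph V) {p q : V} (hpq : p ≠ q) {w₀ : V}
    (hw₀ : MP G p q w₀) (y : EuclideanSpace ℝ V) (hy1 : ‖y‖ = 1) (hynn : ∀ a, 0 ≤ y a)
    (heig : TG G y = specRad G • y) (hyqp : y q ≤ y p)
    (hle : specRad (shiftGraph G p q) ≤ specRad G)
    (hconn : (shiftGraph G p q).Preconnected) : False := by
  set ρ := specRad G with hρdef
  have hσ0 : (0:ℝ) ≤ ∑ w ∈ Mf G p q, y w := Finset.sum_nonneg fun w _ => hynn w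
  have hyy : ⟪y, y⟫ = (1:ℝ) := by
    rw [real_inner_self_eq_norm_sq, hy1]; norm_num
  have hQG : ⟪TG G y, y⟫ = ρ := by
    rw [heig, real_inner_smul_left, hyy, mul_one]
  have hQS : ⟪TG (shiftGraph G p q) y, y⟫ = ρ + 2*(y p - y q) * ∑ w ∈ Mf G p q, y w := by
    rw [inner_shift G hpq, hQG]
  have h1 : ρ ≤ ⟪TG (shiftGraph G p q) y, y⟫ := by
    rw [hQS]; nlinarith
  have h2 : ⟪TG (shiftGraph G p q) y, y⟫ ≤ specRad (shiftGraph G p q) :=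
    inner_le_specRad _ hy1
  have hQS' : ⟪TG (shiftGraph G p q) y, y⟫ = specRad (shiftGraph G p q) :=
    le_antisymm h2 (le_trans hle h1)
  have hSeq : specRad (shiftGraph G p q) = ρ := le_antisymm hle (le_trans h1 h2)
  have heigS : TG (shiftGraph G p q) y = ρ • y := by
    have h := eigvec_of_max (shiftGraph G p q) hy1 hQS'
    rwa [hSeq] at h
  have hrowp : TG (shiftGraph G p q) y p = (ρ • y) p :=
    congrArg (fun w : EuclideanSpace ℝ V => w p) heigS
  rw [mulVec_shift G hpq] at hrowp
  have hMPp : ¬ MP G p q p := fun h => h.2.2 rfl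
  rw [if_pos rfl, if_neg (show ¬ p = q from hpq), if_neg hMPp] at hrowp
  have hGp : TG G y p = (ρ • y) p := congrArg (fun w : EuclideanSpace ℝ V => w p) heig
  have hσ : ∑ w ∈ Mf G p q, y w = 0 := by
    have h1' : TG G y p + (∑ w ∈ Mf G p q, y w) - 0 + 0 = (ρ • y) p := hrowp
    have h2' : TG G y p = (ρ • y) p := hGp
    linarith
  have hw0 : y w₀ = 0 := by
    have hall := (Finset.sum_eq_zero_iff_of_nonneg (fun w _ => hynn w)).mp hσ
    exact hall w₀ (mem_Mf.mpr hw₀)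
  have hρ1 : (1:ℝ) ≤ ρ := one_le_specRad G hw₀.1
  have hzero := eig_zero_prop (shiftGraph G p q) y ρ (by linarith) hynn heigS hconn hw0
  have hnorm0 : ‖y‖ = 0 := by
    have hy0 : y = 0 := PiLp.ext hzero
    rw [hy0, norm_zero]
  rw [hy1] at hnorm0
  norm_num at hnorm0

end SpectralAux

lemma bipG_preconnected (n k : ℕ) (hk : 2 ≤ k) (hn : 2*k ≤ n) :
    (bipG n (k-1) 1).Preconnected := by
  have hn4 : 4 ≤ n := by omega
  have h0 : (0:ℕ) < 2*n := by omega
  have hnn : n < 2*n := by omega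
  have reach : ∀ a : Fin (2*n), (bipG n (k-1) 1).Reachable a ⟨0, h0⟩ := by
    intro a
    by_cases ha : a.val < n
    · have h1 : (bipG n (k-1) 1).Adj a ⟨n, hnn⟩ :=
        Or.inl ⟨ha, le_refl n, Or.inr (show n < 2*n - 1 by omega)⟩
      have h2 : (bipG n (k-1) 1).Adj ⟨n, hnn⟩ ⟨0, h0⟩ :=
        Or.inr ⟨show (0:ℕ) < n by omega, le_refl n, Or.inl (show (0:ℕ) < k - 1 by omega)⟩
      exact h1.reachable.trans h2.reachable
    · have h1 : (bipG n (k-1) 1).Adj ⟨0, h0⟩ a :=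
        Or.inl ⟨show (0:ℕ) < n by omega, le_of_not_gt ha, Or.inl (show (0:ℕ) < k - 1 by omega)⟩
      exact h1.symm.reachable
  intro a b
  exact (reach a).trans (reach b).symm


/-- if ρ(G) ≥ ρ(B_{n,k}) and S_{uv}(G) ≅ B_{n,k} (u < v in the same
part), then G ≅ B_{n,k}. -/
theorem stmt9 (n k : ℕ) (hk : 2 ≤ k) (hn : 2*k ≤ n)
    (G : SimpleGraph (Fin (2*n))) (X Y : Set (Fin (2*n)))
    (hpart : ∀ v, v ∈ X ↔ v ∉ Y) (hX : X.ncard = n)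
    (hbip : ∀ u w, G.Adj u w → (u ∈ X ∧ w ∈ Y) ∨ (u ∈ Y ∧ w ∈ X))
    (u v : Fin (2*n)) (huv : u < v)
    (hside : (u ∈ X ∧ v ∈ X) ∨ (u ∈ Y ∧ v ∈ Y))
    (hρ : specRad (bipG n (k-1) 1) ≤ specRad G)
    (hiso : Nonempty (shiftGraph G u v ≃g bipG n (k-1) 1)) :
    Nonempty (G ≃g bipG n (k-1) 1) := by
  classical
  haveI : Nonempty (Fin (2*n)) := ⟨⟨0, by omega⟩⟩
  obtain ⟨e⟩ := hiso
  have hne : u ≠ v := ne_of_lt huv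
  by_cases hM : ∀ w, ¬ MP G u v w
  · exact ⟨(isoOfEq (shiftGraph_eq_self G hne hM)).symm.trans e⟩
  by_cases hM' : ∀ w, ¬ MP G v u w
  · exact ⟨((isoOfEq (shiftGraph_eq_self G hne.symm hM')).symm.trans
      (shiftSwapIso G hne)).trans e⟩
  exfalso
  push_neg at hM hM'
  obtain ⟨w1, hw1⟩ := hM
  obtain ⟨w2, hw2⟩ := hM'
  obtain ⟨x, hx1, hxe⟩ := exists_top_eigvec G
  set y : EuclideanSpace ℝ (Fin (2*n)) := WithLp.toLp 2 (fun i => |x i|) with hydef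
  have hynn : ∀ a, 0 ≤ y a := fun a => abs_nonneg _
  have hy1 : ‖y‖ = 1 := by
    rw [EuclideanSpace.norm_eq] at hx1 ⊢
    simp only [hydef, PiLp.toLp_apply, Real.norm_eq_abs, abs_abs] at hx1 ⊢
    exact hx1
  have hQx : ⟪TG G x, x⟫ = specRad G := by
    rw [hxe, real_inner_smul_left, real_inner_self_eq_norm_sq, hx1]
    norm_num
  have expand : ∀ z : EuclideanSpace ℝ (Fin (2*n)),
      ⟪TG G z, z⟫ = ∑ a, ∑ b, adjM G a b * (z b * z a) := by
    intro z
    rw [inner_TG]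
    refine Finset.sum_congr rfl fun a _ => ?_
    rw [Finset.sum_mul]
    exact Finset.sum_congr rfl fun b _ => by ring
  have hcmp : ⟪TG G x, x⟫ ≤ ⟪TG G y, y⟫ := by
    rw [expand, expand]
    refine Finset.sum_le_sum fun a _ => Finset.sum_le_sum fun b _ => ?_
    refine mul_le_mul_of_nonneg_left ?_ (adjM_nonneg G a b)
    calc x b * x a ≤ |x b * x a| := le_abs_self _
      _ = |x b| * |x a| := abs_mul _ _
      _ = y b * y a := rfl
  have hQy : ⟪TG G y, y⟫ = specRad G :=
    le_antisymm (inner_le_specRad G hy1) (by rw [← hQx]; exact hcmp)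
  have hye : TG G y = specRad G • y := eigvec_of_max G hy1 hQy
  have hSB : specRad (shiftGraph G u v) = specRad (bipG n (k-1) 1) := specRad_iso e
  have hBconn : (bipG n (k-1) 1).Preconnected := bipG_preconnected n k hk hn
  have hSconn : (shiftGraph G u v).Preconnected := preconnected_of_iso e hBconn
  have iso2 : shiftGraph G v u ≃g bipG n (k-1) 1 := (shiftSwapIso G hne).trans e
  have hSB' : specRad (shiftGraph G v u) = specRad (bipG n (k-1) 1) := specRad_iso iso2
  have hSconn' : (shiftGraph G v u).Preconnected := preconnected_of_iso iso2 hBconn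
  rcases le_total (y v) (y u) with hcase | hcase
  · exact key G hne hw1 y hy1 hynn hye hcase (by rw [hSB]; exact hρ) hSconn
  · exact key G hne.symm hw2 y hy1 hynn hye hcase (by rw [hSB']; exact hρ) hSconn'
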